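/- With the setting of the colinear-means Gaussian mixture model (y = μ + w, μ = ⟨μ, u⟩u discrete, w ∼ N(0,Σ) independent), for every integer t ≥ 1 and every v ∈ ℝ^d: E⟨y, v⟩^(2t) ≤ (⟨u, v⟩² · (E⟨μ, u⟩^(2t))^(1/t) + e·t·(vᵀΣv))^t. -/

import Mathlib

open MeasureTheory ProbabilityTheory Matrix

namespace Stmt10Aux

open MeasureTheory ProbabilityTheory Real Set
open scoped Nat NNReal ENNReal


lemma auxA (s : ℕ) : ∀ t, s ≤ t → (2*t)! * (s ! * s !) ≤ (2*s)! * 4^(t-s) * (t ! * t !) := by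
  refine Nat.le_induction ?_ ?_
  · simp
  · intro n hn ih
    have h1 : 2*(n+1) = 2*n + 1 + 1 := by ring
    have h2 : n + 1 - s = (n - s) + 1 := by omega
    rw [h1, Nat.factorial_succ, Nat.factorial_succ, h2, pow_succ, Nat.factorial_succ]
    calc (2*n+1+1) * ((2*n+1) * (2*n)!) * (s ! * s !)
        = (2*n+2) * (2*n+1) * ((2*n)! * (s ! * s !)) := by ring
      _ ≤ (2*n+2) * (2*n+1) * ((2*s)! * 4^(n-s) * (n ! * n !)) :=
          Nat.mul_le_mul_left _ ih
      _ ≤ (2*(n+1)) * (2*(n+1)) * ((2*s)! * 4^(n-s) * (n ! * n !)) := by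
          have : (2*n+2) * (2*n+1) ≤ (2*(n+1)) * (2*(n+1)) := by nlinarith
          exact Nat.mul_le_mul_right _ this
      _ = (2*s)! * (4^(n-s) * 4) * ((n+1) * n ! * ((n+1) * n !)) := by ring

lemma auxB (s : ℕ) : ∀ t, s ≤ t → t ! ≤ s ! * t^(t-s) := by
  refine Nat.le_induction ?_ ?_
  · simp
  · intro n hn ih
    have h2 : n + 1 - s = (n - s) + 1 := by omega
    rw [Nat.factorial_succ, h2, pow_succ]
    calc (n+1) * n ! ≤ (n+1) * (s ! * n^(n-s)) := Nat.mul_le_mul_left _ ih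
      _ ≤ (n+1) * (s ! * (n+1)^(n-s)) := by
          exact Nat.mul_le_mul_left _ (Nat.mul_le_mul_left _
            (Nat.pow_le_pow_left (Nat.le_succ n) _))
      _ = s ! * (n+1)^(n-s) * (n+1) := by ring
      _ = s ! * ((n+1)^(n-s) * (n+1)) := by ring

lemma auxC {s t : ℕ} (h : s ≤ t) :
    (2*t)! * s ! ≤ (2*s)! * 2^(t-s) * (2*t)^(t-s) * t ! := by
  have hs : 0 < s ! := Nat.factorial_pos s
  have key : (2*t)! * s ! * s ! ≤ ((2*s)! * 2^(t-s) * (2*t)^(t-s) * t !) * s ! := by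
    calc (2*t)! * s ! * s ! = (2*t)! * (s ! * s !) := by ring
      _ ≤ (2*s)! * 4^(t-s) * (t ! * t !) := auxA s t h
      _ ≤ (2*s)! * 4^(t-s) * (t ! * (s ! * t^(t-s))) := by
          exact Nat.mul_le_mul_left _ (Nat.mul_le_mul_left _ (auxB s t h))
      _ = ((2*s)! * (4^(t-s) * t^(t-s)) * t !) * s ! := by ring
      _ = ((2*s)! * 2^(t-s) * (2*t)^(t-s) * t !) * s ! := by
          rw [mul_pow 2 t, ← mul_assoc, show (4:ℕ) = 2*2 by rfl, mul_pow 2 2]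
          ring_nf
  exact Nat.le_of_mul_le_mul_right key hs

lemma auxE : ∀ r : ℕ, (2*r)! = 2^r * r ! * (2*r-1)‼
  | 0 => rfl
  | (r+1) => by
    have h1 : 2*(r+1) = (2*r+1) + 1 := by ring
    have h2 : 2*(r+1) - 1 = 2*r+1 := by omega
    rw [h2, h1, Nat.factorial_eq_mul_doubleFactorial]
    have : (2*r+1+1)‼ = 2^(r+1) * (r+1)! := by
      have := Nat.doubleFactorial_two_mul (r+1)
      rwa [show 2*(r+1) = 2*r+1+1 by ring] at this
    rw [this]

lemma auxD {s t : ℕ} (h : s ≤ t) :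
    (2*t).choose (2*s) * (2*(t-s)-1)‼ ≤ t.choose s * (2*t)^(t-s) := by
  set r := t - s with hr
  have h2s : 2*s ≤ 2*t := by omega
  have hKpos : 0 < (2*s)! * (2^r * r !) * s ! :=
    Nat.mul_pos (Nat.mul_pos (Nat.factorial_pos _)
      (Nat.mul_pos (Nat.pow_pos (by norm_num)) (Nat.factorial_pos _)))
      (Nat.factorial_pos _)
  refine Nat.le_of_mul_le_mul_right ?_ hKpos
  have hL : (2*t).choose (2*s) * (2*r-1)‼ * ((2*s)! * (2^r * r !) * s !)
      = (2*t)! * s ! := by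
    have hc := Nat.choose_mul_factorial_mul_factorial h2s
    have h2r : 2*t - 2*s = 2*r := by omega
    rw [h2r] at hc
    calc (2*t).choose (2*s) * (2*r-1)‼ * ((2*s)! * (2^r * r !) * s !)
        = (2*t).choose (2*s) * (2*s)! * (2^r * r ! * (2*r-1)‼) * s ! := by ring
      _ = (2*t).choose (2*s) * (2*s)! * (2*r)! * s ! := by rw [← auxE]
      _ = (2*t)! * s ! := by rw [hc]
  have hR : (2*t)! * s ! ≤ t.choose s * (2*t)^r * ((2*s)! * (2^r * r !) * s !) := by
    have hc := Nat.choose_mul_factorial_mul_factorial h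
    rw [← hr] at hc
    calc (2*t)! * s ! ≤ (2*s)! * 2^r * (2*t)^r * t ! := auxC h
      _ = (2*s)! * 2^r * (2*t)^r * (t.choose s * s ! * r !) := by rw [hc]
      _ = t.choose s * (2*t)^r * ((2*s)! * (2^r * r !) * s !) := by ring
  rw [hL]
  exact hR

lemma auxDreal {s t : ℕ} (h : s ≤ t) :
    ((2*t).choose (2*s) * (2*(t-s)-1)‼ : ℝ) ≤ t.choose s * (Real.exp 1 * t)^(t-s) := by
  have h1 : ((2*t).choose (2*s) * (2*(t-s)-1)‼ : ℝ) ≤ (t.choose s : ℝ) * (2*t)^(t-s) := by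
    exact_mod_cast Nat.cast_le.mpr (auxD h)
  refine h1.trans ?_
  have h2 : ((2:ℝ)*t)^(t-s) ≤ (Real.exp 1 * t)^(t-s) := by
    apply pow_le_pow_left₀ (by positivity)
    have : (2:ℝ) ≤ Real.exp 1 := by
      have := Real.add_one_le_exp (1:ℝ)
      linarith
    nlinarith [Nat.cast_nonneg (α := ℝ) t]
  have : (0:ℝ) ≤ t.choose s := Nat.cast_nonneg _
  exact mul_le_mul_of_nonneg_left h2 this



lemma gammaHalf : ∀ n : ℕ, Real.Gamma ((n:ℝ) + 1/2) = (2*n-1)‼ * Real.sqrt π / 2^n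
  | 0 => by simpa using Real.Gamma_one_half_eq
  | (n+1) => by
    have hne : (n:ℝ) + 1/2 ≠ 0 := by positivity
    have h1 : ((n+1:ℕ):ℝ) + 1/2 = ((n:ℝ) + 1/2) + 1 := by push_cast; ring
    have h2 : 2*(n+1)-1 = (2*n) + 1 := by omega
    rw [h1, Real.Gamma_add_one hne, gammaHalf n, h2, Nat.doubleFactorial_add_one]
    push_cast
    field_simp
    ring

lemma intIoi (n : ℕ) {b : ℝ} (hb : 0 < b) :
    ∫ x in Ioi (0:ℝ), x^(2*n) * Real.exp (-b * x^2)
      = Real.Gamma ((n:ℝ)+1/2) / (2 * (b^n * Real.sqrt b)) := by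
  have key := integral_comp_rpow_Ioi_of_pos
    (g := fun y => (1/2:ℝ) * (y ^ (((n:ℝ)+1/2) - 1) * Real.exp (-(b*y)))) zero_lt_two
  have hL : ∫ x in Ioi (0:ℝ),
      ((2:ℝ) * x ^ ((2:ℝ) - 1)) • ((1/2:ℝ) * ((x ^ (2:ℝ)) ^ (((n:ℝ)+1/2) - 1)
        * Real.exp (-(b*(x ^ (2:ℝ))))))
      = ∫ x in Ioi (0:ℝ), x^(2*n) * Real.exp (-b * x^2) := by
    refine setIntegral_congr_fun measurableSet_Ioi fun x hx => ?_
    have hx0 : (0:ℝ) < x := hx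
    have hx2 : x ^ (2:ℝ) = x^2 := by
      rw [show (2:ℝ) = ((2:ℕ):ℝ) by norm_num, Real.rpow_natCast]
    have h21 : x ^ ((2:ℝ)-1) = x := by norm_num
    rw [smul_eq_mul, hx2, h21]
    have hpow : (x^2) ^ (((n:ℝ)+1/2) - 1) = x ^ ((2*(n:ℝ)) - 1) := by
      rw [← Real.rpow_natCast x 2, ← Real.rpow_mul hx0.le]
      ring_nf
    rw [hpow]
    have hstep : x * x ^ ((2*(n:ℝ))-1) = x ^ (2*n) :=
      calc x * x ^ ((2*(n:ℝ))-1) = x^(1:ℝ) * x^(2*(n:ℝ)-1) := by rw [Real.rpow_one]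
        _ = x ^ ((1:ℝ) + (2*(n:ℝ)-1)) := (Real.rpow_add hx0 _ _).symm
        _ = x ^ (((2*n:ℕ):ℝ)) := by push_cast; ring_nf
        _ = x ^ (2*n) := Real.rpow_natCast x (2*n)
    calc (2:ℝ) * x * (1/2 * (x ^ ((2*(n:ℝ))-1) * Real.exp (-(b*x^2))))
        = (x * x ^ ((2*(n:ℝ))-1)) * Real.exp (-(b*x^2)) := by ring
      _ = x^(2*n) * Real.exp (-b * x^2) := by rw [hstep, neg_mul]
  have hb' : ((1:ℝ)/b) ^ ((n:ℝ)+1/2) = (b^n * Real.sqrt b)⁻¹ := by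
    rw [one_div, ← Real.rpow_natCast b n, Real.sqrt_eq_rpow, ← Real.rpow_add hb,
      Real.inv_rpow hb.le]
  have hR : ∫ y in Ioi (0:ℝ), (1/2:ℝ) * (y ^ (((n:ℝ)+1/2) - 1) * Real.exp (-(b*y)))
      = Real.Gamma ((n:ℝ)+1/2) / (2 * (b^n * Real.sqrt b)) := by
    rw [integral_const_mul, Real.integral_rpow_mul_exp_neg_mul_Ioi (by positivity) hb, hb']
    have hX : (0:ℝ) < b^n * Real.sqrt b := by positivity
    field_simp
  rw [← hL, key, hR]




lemma intPow (j : ℕ) {b : ℝ} (hb : 0 < b) :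
    Integrable (fun x : ℝ => x^j * Real.exp (-b * x^2)) := by
  have hj : (-1:ℝ) < (j:ℝ) := lt_of_lt_of_le neg_one_lt_zero (Nat.cast_nonneg j)
  have h := integrable_rpow_mul_exp_neg_mul_sq hb hj
  simpa [Real.rpow_natCast] using h

lemma intR (n : ℕ) {b : ℝ} (hb : 0 < b) :
    ∫ x : ℝ, x^(2*n) * Real.exp (-b * x^2)
      = Real.Gamma ((n:ℝ)+1/2) / (b^n * Real.sqrt b) := by
  have hint : Integrable (fun x : ℝ => x^(2*n) * Real.exp (-b * x^2)) := intPow _ hb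
  have heven : ∀ x : ℝ, (-x)^(2*n) * Real.exp (-b * (-x)^2)
      = x^(2*n) * Real.exp (-b * x^2) := by
    intro x
    rw [neg_sq, (even_two_mul n).neg_pow]
  have hIic : ∫ x in Iic (0:ℝ), x^(2*n) * Real.exp (-b * x^2)
      = ∫ x in Ioi (0:ℝ), x^(2*n) * Real.exp (-b * x^2) := by
    rw [show Iic (0:ℝ) = Iic (-0) by norm_num, ← integral_comp_neg_Ioi]
    exact setIntegral_congr_fun measurableSet_Ioi fun x _ => heven x
  rw [← intervalIntegral.integral_Iic_add_Ioi (hint.integrableOn) (hint.integrableOn), hIic,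
    intIoi n hb]
  have h1 : (0:ℝ) < b^n * Real.sqrt b := by positivity
  field_simp
  ring

lemma oddZero (f : ℝ → ℝ) (hf : ∀ x, f (-x) = - f x) : ∫ x : ℝ, f x = 0 := by
  have h := integral_neg_eq_self f (volume : Measure ℝ)
  simp_rw [hf, integral_neg] at h
  linarith

lemma pdfSmul (v : ℝ≥0) (hv : v ≠ 0) (g : ℝ → ℝ) :
    ∫ x, g x ∂(gaussianReal 0 v)
      = ∫ x, gaussianPDFReal 0 v x * g x := by
  rw [gaussianReal_of_var_ne_zero 0 hv]
  have hmeas : Measurable (fun x => (gaussianPDFReal 0 v x).toNNReal) :=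
    (measurable_gaussianPDFReal 0 v).real_toNNReal
  have hpdf : gaussianPDF 0 v = fun x => ((gaussianPDFReal 0 v x).toNNReal : ℝ≥0∞) := by
    funext x; rfl
  rw [hpdf, integral_withDensity_eq_integral_smul hmeas]
  refine integral_congr_ae (Filter.Eventually.of_forall fun x => ?_)
  show (gaussianPDFReal 0 v x).toNNReal • g x = gaussianPDFReal 0 v x * g x
  rw [NNReal.smul_def, smul_eq_mul, Real.coe_toNNReal _ (gaussianPDFReal_nonneg 0 v x)]

lemma gaussIntegrable (v : ℝ≥0) (j : ℕ) :
    Integrable (fun x : ℝ => x^j) (gaussianReal 0 v) := by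
  rcases eq_or_ne v 0 with rfl | hv
  · rw [gaussianReal_zero_var]
    refine (integrable_const ((0:ℝ)^j)).congr ?_
    rw [ae_dirac_eq]
    exact Filter.eventually_pure.2 rfl
  · rw [gaussianReal_of_var_ne_zero 0 hv]
    have hmeas : Measurable (fun x => (gaussianPDFReal 0 v x).toNNReal) :=
      (measurable_gaussianPDFReal 0 v).real_toNNReal
    have hpdf : gaussianPDF 0 v = fun x => ((gaussianPDFReal 0 v x).toNNReal : ℝ≥0∞) := by
      funext x; rfl
    rw [hpdf, integrable_withDensity_iff_integrable_smul hmeas]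
    have hb : (0:ℝ) < (2 * (v:ℝ))⁻¹ := by
      have : (0:ℝ) < (v:ℝ) := by positivity
      positivity
    have h2 : Integrable (fun x : ℝ =>
        (Real.sqrt (2 * π * (v:ℝ)))⁻¹ * (x^j * Real.exp (-(2 * (v:ℝ))⁻¹ * x^2))) :=
      (intPow j hb).const_mul _
    refine h2.congr (Filter.Eventually.of_forall fun x => ?_)
    show (√(2 * π * (v:ℝ)))⁻¹ * (x ^ j * rexp (-(2 * (v:ℝ))⁻¹ * x ^ 2))
      = (gaussianPDFReal 0 v x).toNNReal • x ^ j
    rw [NNReal.smul_def, smul_eq_mul, Real.coe_toNNReal _ (gaussianPDFReal_nonneg 0 v x),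
      gaussianPDFReal]
    have : -(x - 0)^2 / (2 * (v:ℝ)) = -(2 * (v:ℝ))⁻¹ * x^2 := by
      rw [sub_zero]; field_simp
    rw [this]
    ring

lemma gaussEven (v : ℝ≥0) (n : ℕ) :
    ∫ x, x^(2*n) ∂(gaussianReal 0 v) = (2*n-1)‼ * (v:ℝ)^n := by
  rcases eq_or_ne v 0 with rfl | hv
  · rw [gaussianReal_zero_var, integral_dirac]
    rcases Nat.eq_zero_or_pos n with rfl | hn
    · norm_num
    · rw [zero_pow (by omega), NNReal.coe_zero, zero_pow (by omega), mul_zero]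
  · have hc0 : (0:ℝ) < (v:ℝ) := by
      have := hv; positivity
    have hb : (0:ℝ) < (2 * (v:ℝ))⁻¹ := by positivity
    rw [pdfSmul v hv]
    have hcong : ∀ x : ℝ, gaussianPDFReal 0 v x * x^(2*n)
        = (Real.sqrt (2 * π * (v:ℝ)))⁻¹ * (x^(2*n) * Real.exp (-(2 * (v:ℝ))⁻¹ * x^2)) := by
      intro x
      rw [gaussianPDFReal]
      have : -(x - 0)^2 / (2 * (v:ℝ)) = -(2 * (v:ℝ))⁻¹ * x^2 := by
        rw [sub_zero]; field_simp
      rw [this]; ring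
    rw [integral_congr_ae (Filter.Eventually.of_forall hcong), integral_const_mul,
      intR n hb, gammaHalf n]
    -- algebra
    have h2v : (0:ℝ) < 2 * (v:ℝ) := by positivity
    rw [inv_pow, Real.sqrt_inv, show 2 * π * (v:ℝ) = π * (2 * (v:ℝ)) by ring,
      Real.sqrt_mul Real.pi_pos.le, mul_pow (2:ℝ)]
    have hπ : Real.sqrt π ≠ 0 := by positivity
    have hs : Real.sqrt (2 * (v:ℝ)) ≠ 0 := by positivity
    field_simp

lemma gaussOdd (v : ℝ≥0) (n : ℕ) :
    ∫ x, x^(2*n+1) ∂(gaussianReal 0 v) = 0 := by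
  rcases eq_or_ne v 0 with rfl | hv
  · rw [gaussianReal_zero_var, integral_dirac, zero_pow (by omega)]
  · rw [pdfSmul v hv]
    refine oddZero _ fun x => ?_
    have hpdf : gaussianPDFReal 0 v (-x) = gaussianPDFReal 0 v x := by
      unfold gaussianPDFReal
      rw [sub_zero, sub_zero, neg_sq]
    rw [hpdf, (odd_two_mul_add_one n).neg_pow, mul_neg]



lemma bddInt {Ω : Type*} [MeasurableSpace Ω] (P : Measure Ω) [IsProbabilityMeasure P]
    (X : Ω → ℝ) (hmeas : Measurable X) {C : ℝ} (hC : ∀ ω, |X ω| ≤ C) (j : ℕ) :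
    Integrable (fun ω => X ω ^ j) P := by
  refine Integrable.mono' (integrable_const (C^j)) ((hmeas.pow_const j).aestronglyMeasurable)
    (Filter.Eventually.of_forall fun ω => ?_)
  rw [norm_pow, Real.norm_eq_abs]
  exact pow_le_pow_left₀ (abs_nonneg _) (hC ω) j

lemma jensen {Ω : Type*} [MeasurableSpace Ω] (P : Measure Ω) [IsProbabilityMeasure P]
    (X : Ω → ℝ) (hmeas : Measurable X) {C : ℝ} (hC : ∀ ω, |X ω| ≤ C)
    {s t : ℕ} (hst : s ≤ t) (ht : 1 ≤ t) :
    ∫ ω, X ω ^ (2*s) ∂P ≤ (∫ ω, X ω ^ (2*t) ∂P) ^ ((s:ℝ)/(t:ℝ)) := by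
  have hM : (0:ℝ) ≤ ∫ ω, X ω ^ (2*t) ∂P :=
    integral_nonneg fun ω => (even_two_mul _).pow_nonneg _
  rcases Nat.eq_zero_or_pos s with rfl | hs
  · simp [integral_const, measure_univ]
  · have hs0 : (0:ℝ) < s := by exact_mod_cast hs
    have ht0 : (0:ℝ) < t := by exact_mod_cast ht
    have hp1 : (1:ℝ) ≤ (t:ℝ)/(s:ℝ) := by
      rw [le_div_iff₀ hs0]
      simpa using (Nat.cast_le (α := ℝ)).2 hst
    have hkey : ∀ y : ℝ, (y^(2*s)) ^ ((t:ℝ)/(s:ℝ)) = y^(2*t) := by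
      intro y
      have h0 : (0:ℝ) ≤ y^2 := sq_nonneg y
      rw [pow_mul, pow_mul,
        ← Real.rpow_natCast (y^2) s, ← Real.rpow_mul h0, ← Real.rpow_natCast (y^2) t]
      congr 1
      field_simp
    have hjen := ConvexOn.map_integral_le (μ := P) (s := Ici (0:ℝ))
      (g := fun z => z ^ ((t:ℝ)/(s:ℝ))) (f := fun ω => X ω ^ (2*s))
      (convexOn_rpow hp1)
      ((Real.continuous_rpow_const (by positivity)).continuousOn)
      isClosed_Ici
      (Filter.Eventually.of_forall fun ω => Set.mem_Ici.2 ((even_two_mul _).pow_nonneg _))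
      (bddInt P X hmeas hC (2*s))
      (by
        have := bddInt P X hmeas hC (2*t)
        refine this.congr (Filter.Eventually.of_forall fun ω => ?_)
        simp only [Function.comp]
        rw [hkey (X ω)])
    rw [integral_congr_ae (Filter.Eventually.of_forall fun ω => hkey (X ω))] at hjen
    -- hjen : (∫ X^{2s}) ^ (t/s) ≤ ∫ X^{2t}
    have hL : (0:ℝ) ≤ ∫ ω, X ω ^ (2*s) ∂P := integral_nonneg fun ω => (even_two_mul _).pow_nonneg _
    calc ∫ ω, X ω ^ (2*s) ∂P
        = ((∫ ω, X ω ^ (2*s) ∂P) ^ ((t:ℝ)/(s:ℝ))) ^ ((s:ℝ)/(t:ℝ)) := by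
          rw [← Real.rpow_mul hL,
            show (t:ℝ)/(s:ℝ) * ((s:ℝ)/(t:ℝ)) = 1 by field_simp, Real.rpow_one]
      _ ≤ (∫ ω, X ω ^ (2*t) ∂P) ^ ((s:ℝ)/(t:ℝ)) :=
          Real.rpow_le_rpow (Real.rpow_nonneg hL _) hjen (by positivity)

lemma sumEven (t : ℕ) (f : ℕ → ℝ) (hodd : ∀ k, f (2*k+1) = 0) :
    ∑ i ∈ Finset.range (2*t+1), f i = ∑ s ∈ Finset.range (t+1), f (2*s) := by
  induction t with
  | zero => simp
  | succ n ih =>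
      rw [show 2*(n+1)+1 = (2*n+1)+1+1 by ring, Finset.sum_range_succ, Finset.sum_range_succ,
        ih, Finset.sum_range_succ (n := n+1), hodd n, add_zero,
        show 2*n+1+1 = 2*(n+1) by ring]

end Stmt10Aux

open scoped Nat
open Stmt10Aux

/-- Moment upper bound for the colinear-means Gaussian mixture: `y = μ + w`, `μ` discrete
on the line spanned by unit vector `u`, `w ∼ N(0, Σ)` independent. For every `t ≥ 1`, `v`:
`E⟨y, v⟩^(2t) ≤ (⟨u,v⟩² (E⟨μ,u⟩^(2t))^(1/t) + e t (vᵀΣv))^t`. -/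
theorem stmt10 {Ω : Type*} [MeasurableSpace Ω] (P : Measure Ω) [IsProbabilityMeasure P]
    {d k : ℕ} (S : Matrix (Fin d) (Fin d) ℝ) (hS : S.PosSemidef)
    (u : Fin d → ℝ) (hu : u ⬝ᵥ u = 1)
    (μRV wRV : Ω → (Fin d → ℝ))
    (hμmeas : Measurable μRV) (hwmeas : Measurable wRV)
    (m : Fin k → (Fin d → ℝ)) (hrange : ∀ ω, ∃ j, μRV ω = m j)
    (hcol : ∀ j, m j = (m j ⬝ᵥ u) • u)
    (hindep : IndepFun μRV wRV P)
    (hgauss : ∀ v : Fin d → ℝ,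
      Measure.map (fun ω => wRV ω ⬝ᵥ v) P
        = gaussianReal 0 (Real.toNNReal (v ⬝ᵥ S.mulVec v)))
    (t : ℕ) (ht : 1 ≤ t) (v : Fin d → ℝ) :
    ∫ ω, ((μRV ω + wRV ω) ⬝ᵥ v) ^ (2 * t) ∂P
      ≤ ((u ⬝ᵥ v) ^ 2 * (∫ ω, (μRV ω ⬝ᵥ u) ^ (2 * t) ∂P) ^ ((1 : ℝ) / t)
          + Real.exp 1 * t * (v ⬝ᵥ S.mulVec v)) ^ t := by
  classical
  have hσnn : (0:ℝ) ≤ v ⬝ᵥ S.mulVec v := by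
    have h := hS.dotProduct_mulVec_nonneg v
    simpa using h
  set σ2 : ℝ := v ⬝ᵥ S.mulVec v with hσ2def
  set a : ℝ := u ⬝ᵥ v with hadef
  set X : Ω → ℝ := fun ω => μRV ω ⬝ᵥ u with hXdef
  set W : Ω → ℝ := fun ω => wRV ω ⬝ᵥ v with hWdef
  have hXmeas : Measurable X :=
    Finset.measurable_sum Finset.univ
      (fun i _ => ((measurable_pi_apply i).comp hμmeas).mul_const (u i))
  have hWmeas : Measurable W :=
    Finset.measurable_sum Finset.univ
      (fun i _ => ((measurable_pi_apply i).comp hwmeas).mul_const (v i))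
  set C : ℝ := ∑ j : Fin k, |m j ⬝ᵥ u| with hCdef
  have hCX : ∀ ω, |X ω| ≤ C := by
    intro ω
    obtain ⟨j, hj⟩ := hrange ω
    show |μRV ω ⬝ᵥ u| ≤ C
    rw [hj]
    exact Finset.single_le_sum (f := fun j => |m j ⬝ᵥ u|)
      (fun i _ => abs_nonneg _) (Finset.mem_univ j)
  have hXint : ∀ i : ℕ, Integrable (fun ω => X ω ^ i) P := bddInt P X hXmeas hCX
  have hgmap : Measure.map W P = gaussianReal 0 σ2.toNNReal := hgauss v
  have hWint : ∀ j : ℕ, Integrable (fun ω => W ω ^ j) P := by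
    intro j
    have h1 : Integrable (fun x : ℝ => x ^ j) (Measure.map W P) := by
      rw [hgmap]; exact gaussIntegrable _ j
    have hg : AEStronglyMeasurable (fun x : ℝ => x ^ j) (Measure.map W P) :=
      (measurable_id.pow_const j).aestronglyMeasurable
    exact (integrable_map_measure hg hWmeas.aemeasurable).mp h1
  have hWmom : ∀ j : ℕ, ∫ ω, W ω ^ j ∂P = ∫ x, x ^ j ∂(gaussianReal 0 σ2.toNNReal) := by
    intro j
    have hg : AEStronglyMeasurable (fun x : ℝ => x ^ j) (Measure.map W P) :=
      (measurable_id.pow_const j).aestronglyMeasurable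
    rw [← hgmap, integral_map hWmeas.aemeasurable hg]
  have hprod : ∀ i j : ℕ, ∫ ω, X ω ^ i * W ω ^ j ∂P
      = (∫ ω, X ω ^ i ∂P) * ∫ ω, W ω ^ j ∂P := by
    intro i j
    have hdot1 : Measurable fun z : Fin d → ℝ => (z ⬝ᵥ u) ^ i :=
      (Finset.measurable_sum Finset.univ
        (fun l _ => (measurable_pi_apply (X := fun _ : Fin d => ℝ) l).mul_const (u l))).pow_const i
    have hdot2 : Measurable fun z : Fin d → ℝ => (z ⬝ᵥ v) ^ j :=
      (Finset.measurable_sum Finset.univ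
        (fun l _ => (measurable_pi_apply (X := fun _ : Fin d => ℝ) l).mul_const (v l))).pow_const j
    exact IndepFun.integral_fun_mul_eq_mul_integral (hindep.comp hdot1 hdot2) (hXint i).1 (hWint j).1
  have hM : (0:ℝ) ≤ ∫ ω, X ω ^ (2*t) ∂P :=
    integral_nonneg fun ω => (even_two_mul _).pow_nonneg _
  set M : ℝ := ∫ ω, X ω ^ (2*t) ∂P with hMdef
  -- pointwise rewriting of the integrand
  have hy : ∀ ω, (μRV ω + wRV ω) ⬝ᵥ v = a * X ω + W ω := by
    intro ω
    obtain ⟨j, hj⟩ := hrange ω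
    rw [add_dotProduct]
    congr 1
    calc μRV ω ⬝ᵥ v = ((m j ⬝ᵥ u) • u) ⬝ᵥ v := by rw [hj, ← hcol j]
      _ = (m j ⬝ᵥ u) * a := by rw [smul_dotProduct, smul_eq_mul]
      _ = a * X ω := by rw [mul_comm]; show a * (m j ⬝ᵥ u) = a * (μRV ω ⬝ᵥ u); rw [hj]
  -- binomial expansion
  have hexp : ∀ ω, (a * X ω + W ω)^(2*t)
      = ∑ i ∈ Finset.range (2*t+1),
          X ω^i * W ω^(2*t-i) * (a^i * ((2*t).choose i : ℝ)) := by
    intro ω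
    rw [add_pow]
    refine Finset.sum_congr rfl fun i _ => ?_
    rw [mul_pow]
    ring
  have hterm_int : ∀ i : ℕ, Integrable
      (fun ω => X ω^i * W ω^(2*t-i) * (a^i * ((2*t).choose i : ℝ))) P := by
    intro i
    refine Integrable.mul_const ?_ _
    refine Integrable.bdd_mul (c := C^i) (hWint (2*t-i)) ((hXmeas.pow_const i).aestronglyMeasurable) ?_
    refine Filter.Eventually.of_forall fun ω => ?_
    rw [norm_pow, Real.norm_eq_abs]
    exact pow_le_pow_left₀ (abs_nonneg _) (hCX ω) i
  have hint_eq : ∫ ω, ((μRV ω + wRV ω) ⬝ᵥ v) ^ (2*t) ∂P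
      = ∑ i ∈ Finset.range (2*t+1),
          (∫ ω, X ω^i ∂P) * (∫ x, x^(2*t-i) ∂(gaussianReal 0 σ2.toNNReal))
            * (a^i * ((2*t).choose i : ℝ)) := by
    calc ∫ ω, ((μRV ω + wRV ω) ⬝ᵥ v) ^ (2*t) ∂P
        = ∫ ω, ∑ i ∈ Finset.range (2*t+1),
            X ω^i * W ω^(2*t-i) * (a^i * ((2*t).choose i : ℝ)) ∂P := by
          refine integral_congr_ae (Filter.Eventually.of_forall fun ω => ?_)
          dsimp only
          rw [hy ω, hexp ω]
      _ = ∑ i ∈ Finset.range (2*t+1),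
            ∫ ω, X ω^i * W ω^(2*t-i) * (a^i * ((2*t).choose i : ℝ)) ∂P :=
          integral_finset_sum _ fun i _ => hterm_int i
      _ = ∑ i ∈ Finset.range (2*t+1),
            (∫ ω, X ω^i ∂P) * (∫ x, x^(2*t-i) ∂(gaussianReal 0 σ2.toNNReal))
              * (a^i * ((2*t).choose i : ℝ)) := by
          refine Finset.sum_congr rfl fun i _ => ?_
          rw [integral_mul_const, hprod i (2*t-i), hWmom (2*t-i)]
  -- drop odd terms
  have hodd : ∀ l : ℕ,
      (∫ ω, X ω^(2*l+1) ∂P) * (∫ x, x^(2*t-(2*l+1)) ∂(gaussianReal 0 σ2.toNNReal))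
        * (a^(2*l+1) * ((2*t).choose (2*l+1) : ℝ)) = 0 := by
    intro l
    by_cases hl : 2*l+1 ≤ 2*t
    · have h1 : 2*t-(2*l+1) = 2*(t-l-1)+1 := by omega
      rw [h1, gaussOdd]
      ring
    · have h1 : (2*t).choose (2*l+1) = 0 := Nat.choose_eq_zero_of_lt (by omega)
      rw [h1]
      push_cast
      ring
  rw [hint_eq, sumEven t _ hodd]
  -- bound each even term
  have hσc : (σ2.toNNReal : ℝ) = σ2 := Real.coe_toNNReal _ hσnn
  have hbound : ∀ s ∈ Finset.range (t+1),
      (∫ ω, X ω^(2*s) ∂P) * (∫ x, x^(2*t-2*s) ∂(gaussianReal 0 σ2.toNNReal))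
        * (a^(2*s) * ((2*t).choose (2*s) : ℝ))
      ≤ (t.choose s : ℝ) * (a^2 * M ^ ((1:ℝ)/t))^s * (Real.exp 1 * t * σ2)^(t-s) := by
    intro s hs
    have hst : s ≤ t := by
      have := Finset.mem_range.mp hs; omega
    have h2ts : 2*t - 2*s = 2*(t-s) := by omega
    rw [h2ts, gaussEven, hσc]
    have hjen' : ∫ ω, X ω^(2*s) ∂P ≤ (M ^ ((1:ℝ)/t))^s := by
      have h1 := jensen P X hXmeas hCX hst ht
      have h2 : (M ^ ((1:ℝ)/t))^s = M ^ ((s:ℝ)/(t:ℝ)) := by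
        rw [← Real.rpow_natCast (M ^ ((1:ℝ)/t)) s, ← Real.rpow_mul hM]
        congr 1
        ring
      rw [h2]
      exact h1
    have hcomb := auxDreal hst
    have hXnn : (0:ℝ) ≤ ∫ ω, X ω^(2*s) ∂P :=
      integral_nonneg fun ω => (even_two_mul _).pow_nonneg _
    have hrt : (0:ℝ) ≤ Real.exp 1 * t := by positivity
    calc (∫ ω, X ω^(2*s) ∂P) * (((2*(t-s)-1)‼ : ℝ) * σ2^(t-s))
          * (a^(2*s) * ((2*t).choose (2*s) : ℝ))
        = (((2*t).choose (2*s) : ℝ) * ((2*(t-s)-1)‼ : ℝ)) * (∫ ω, X ω^(2*s) ∂P)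
            * ((a^2)^s * σ2^(t-s)) := by rw [pow_mul]; ring
      _ ≤ ((t.choose s : ℝ) * (Real.exp 1 * t)^(t-s)) * ((M ^ ((1:ℝ)/t))^s)
            * ((a^2)^s * σ2^(t-s)) := by
          refine mul_le_mul_of_nonneg_right ?_
            (mul_nonneg (pow_nonneg (sq_nonneg a) s) (pow_nonneg hσnn _))
          exact mul_le_mul hcomb hjen' hXnn (by positivity)
      _ = (t.choose s : ℝ) * (a^2 * M ^ ((1:ℝ)/t))^s * (Real.exp 1 * t * σ2)^(t-s) := by
          rw [mul_pow, mul_pow]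
          ring
  refine (Finset.sum_le_sum hbound).trans ?_
  rw [add_pow]
  refine le_of_eq (Finset.sum_congr rfl fun s _ => ?_)
  ring
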